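/- Let X be a real-valued random variable with continuous cumulative distribution function F, let q ∈ (0,1], and let t = F^{-1}(1-q). Then for every event A with P[A] = q, we have E[X · 1_A] ≤ E[X · 1_{X ≥ t}]; that is, conditioning on X exceeding its (1-q)-quantile maximizes the conditional expectation over all events of probability q. -/

import Mathlib

open MeasureTheory ProbabilityTheory in
/-- For an integrable random variable `X` with continuous CDF, `q ∈ (0,1]`, and
`t = F⁻¹(1-q)` a `(1-q)`-quantile (i.e. `P[X ≥ t] = q`), every event `A` with `P[A] = q`
satisfies `E[X · 1_A] ≤ E[X · 1_{X ≥ t}]`: conditioning on `X` exceeding its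
`(1-q)`-quantile maximizes the conditional expectation over events of probability `q`. -/
theorem stmt_7 {Ω : Type*} [MeasureSpace Ω] [IsProbabilityMeasure (ℙ : Measure Ω)]
    (X : Ω → ℝ) (hX : Measurable X) (hint : Integrable X)
    (q : ℝ) (hq0 : 0 < q) (hq1 : q ≤ 1)
    (t : ℝ) (ht : ℙ {ω | t ≤ X ω} = ENNReal.ofReal q)
    (A : Set Ω) (hA : MeasurableSet A) (hAq : ℙ A = ENNReal.ofReal q) :
    (∫ ω, A.indicator X ω) ≤ ∫ ω, Set.indicator {ω | t ≤ X ω} X ω := by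
  set B : Set Ω := {ω | t ≤ X ω} with hBdef
  have hBm : MeasurableSet B := hX measurableSet_Ici
  rw [integral_indicator hA, integral_indicator hBm]
  have hAint : IntegrableOn X A ℙ := hint.integrableOn
  have hBint : IntegrableOn X B ℙ := hint.integrableOn
  have hsplitA : ∫ ω in A, X ω = (∫ ω in A ∩ B, X ω) + ∫ ω in A \ B, X ω :=
    (integral_inter_add_diff hBm hAint).symm
  have hsplitB : ∫ ω in B, X ω = (∫ ω in B ∩ A, X ω) + ∫ ω in B \ A, X ω :=
    (integral_inter_add_diff hA hBint).symm
  have hmeq : ℙ (A \ B) = ℙ (B \ A) := by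
    have h1 : ℙ (A ∩ B) + ℙ (A \ B) = ℙ A := measure_inter_add_diff A hBm
    have h2 : ℙ (B ∩ A) + ℙ (B \ A) = ℙ B := measure_inter_add_diff B hA
    rw [Set.inter_comm] at h2
    have h3 : ℙ (A ∩ B) + ℙ (A \ B) = ℙ (A ∩ B) + ℙ (B \ A) := by
      rw [h1, h2, hAq, ht]
    exact ENNReal.add_right_inj (measure_lt_top ℙ _).ne |>.mp h3
  have hup : ∫ ω in A \ B, X ω ≤ t * (ℙ (A \ B)).toReal := by
    have h := setIntegral_mono_on (μ := ℙ) (s := A \ B) (f := X) (g := fun _ => t)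
      hint.integrableOn (integrableOn_const (measure_lt_top ℙ _).ne)
      (hA.diff hBm) (fun x hx => le_of_lt (lt_of_not_ge hx.2))
    simpa [mul_comm, Measure.real] using h
  have hlo : t * (ℙ (B \ A)).toReal ≤ ∫ ω in B \ A, X ω := by
    have := setIntegral_ge_of_const_le_real (hBm.diff hA) (measure_lt_top ℙ _).ne
      (fun x hx => hx.1) hint.integrableOn
    exact this
  rw [hsplitA, hsplitB, Set.inter_comm B A]
  gcongr (∫ ω in A ∩ B, X ω) + ?_
  calc ∫ ω in A \ B, X ω ≤ t * (ℙ (A \ B)).toReal := hup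
    _ = t * (ℙ (B \ A)).toReal := by rw [hmeq]
    _ ≤ ∫ ω in B \ A, X ω := hlo
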